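/- The function x ↦ ϑ₃(π/2, ix) = 1 + 2Σ_{n≥1} (−1)ⁿ e^{-πxn²} is increasing on the interval (0.2, ∞). -/

import Mathlib

/-- Real-valued theta function ϑ₃(z, ix) = Σ_{n∈ℤ} e^{-πxn²} cos(2nz). -/
noncomputable def theta3R (z x : ℝ) : ℝ :=
  ∑' n : ℤ, Real.exp (-Real.pi * x * (n : ℝ) ^ 2) * Real.cos (2 * (n : ℝ) * z)

noncomputable def E (x : ℝ) (n : ℕ) : ℝ := Real.exp (-Real.pi * x * (n : ℝ) ^ 2)

lemma cos_nat_mul_pi (m : ℕ) : Real.cos ((m : ℝ) * Real.pi) = (-1 : ℝ) ^ m := by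
  induction m with
  | zero => simp
  | succ n ih =>
    have : ((n + 1 : ℕ) : ℝ) * Real.pi = (n : ℝ) * Real.pi + Real.pi := by push_cast; ring
    rw [this, Real.cos_add, Real.cos_pi, Real.sin_pi, ih]
    ring

lemma summable_E {x : ℝ} (hx : 0 < x) : Summable fun n : ℕ => E x n := by
  have hlt : Real.exp (-Real.pi * x) < 1 := by
    rw [Real.exp_lt_one_iff]
    nlinarith [Real.pi_pos]
  refine Summable.of_nonneg_of_le (fun n => (Real.exp_pos _).le) (fun n => ?_)
    (summable_geometric_of_lt_one (Real.exp_pos _).le hlt)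
  rw [← Real.exp_nat_mul]
  apply Real.exp_le_exp.mpr
  have hn : (n : ℝ) ≤ (n : ℝ) ^ 2 := by
    rcases Nat.eq_zero_or_pos n with h | h
    · simp [h]
    · have : (1 : ℝ) ≤ (n : ℝ) := by exact_mod_cast h
      nlinarith
  nlinarith [mul_le_mul_of_nonneg_left hn (mul_pos Real.pi_pos hx).le]

lemma summable_g {x : ℝ} (hx : 0 < x) :
    Summable fun n : ℕ => (-1 : ℝ) ^ (n + 1) * E x (n + 1) := by
  refine Summable.of_abs ?_
  refine ((summable_nat_add_iff 1).mpr (summable_E hx)).congr fun n => ?_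
  simp only [E, abs_mul, abs_pow, abs_neg, abs_one, one_pow, one_mul,
    abs_of_pos (Real.exp_pos _)]

lemma theta_eq {x : ℝ} (hx : 0 < x) :
    theta3R (Real.pi / 2) x = 1 + 2 * ∑' n : ℕ, (-1 : ℝ) ^ (n + 1) * E x (n + 1) := by
  set F : ℤ → ℝ := fun n =>
    Real.exp (-Real.pi * x * (n : ℝ) ^ 2) * Real.cos (2 * (n : ℝ) * (Real.pi / 2)) with hF
  have key1 : ∀ n : ℕ, F ((n : ℤ) + 1) = (-1 : ℝ) ^ (n + 1) * E x (n + 1) := by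
    intro n
    rw [hF]
    have h1 : (((n : ℤ) + 1 : ℤ) : ℝ) = ((n + 1 : ℕ) : ℝ) := by push_cast; ring
    simp only [h1]
    have h2 : 2 * ((n + 1 : ℕ) : ℝ) * (Real.pi / 2) = ((n + 1 : ℕ) : ℝ) * Real.pi := by ring
    rw [h2, cos_nat_mul_pi, E, mul_comm]
  have key2 : ∀ n : ℕ, F (-((n : ℤ) + 1)) = (-1 : ℝ) ^ (n + 1) * E x (n + 1) := by
    intro n
    rw [hF]
    have h1 : ((-((n : ℤ) + 1) : ℤ) : ℝ) = -((n + 1 : ℕ) : ℝ) := by push_cast; ring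
    simp only [h1]
    have h2 : 2 * (-((n + 1 : ℕ) : ℝ)) * (Real.pi / 2) = -(((n + 1 : ℕ) : ℝ) * Real.pi) := by
      ring
    rw [h2, Real.cos_neg, neg_sq, cos_nat_mul_pi, E, mul_comm]
  have hs1 : Summable fun n : ℕ => F ((n : ℤ) + 1) :=
    (summable_g hx).congr fun n => (key1 n).symm
  have hs2 : Summable fun n : ℕ => F (-((n : ℤ) + 1)) :=
    (summable_g hx).congr fun n => (key2 n).symm
  have hth : theta3R (Real.pi / 2) x = ∑' n : ℤ, F n := rfl
  have hF0 : F 0 = 1 := by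
    rw [hF]; norm_num
  rw [hth, tsum_of_add_one_of_neg_add_one hs1 hs2, tsum_congr key1, tsum_congr key2, hF0]
  ring

lemma exp_bound {x m : ℝ} (hx : 0.2 < x) (hm : 1 ≤ m) :
    (4 : ℝ) < Real.exp (Real.pi * x * (2 * m + 1)) := by
  have h6 : (1.6 : ℝ) < Real.exp 0.6 := by
    have := Real.add_one_lt_exp (x := 0.6) (by norm_num)
    linarith
  have h18 : (4 : ℝ) < Real.exp 1.8 := by
    have h3 : (1.6 : ℝ) ^ 3 < Real.exp 0.6 ^ 3 := by
      apply pow_lt_pow_left₀ h6 (by norm_num)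
      norm_num
    have he : Real.exp 0.6 ^ 3 = Real.exp 1.8 := by
      rw [← Real.exp_nat_mul]; norm_num
    nlinarith
  have hx0 : (0 : ℝ) < x := lt_trans (by norm_num) hx
  have hm3 : (3 : ℝ) ≤ 2 * m + 1 := by linarith
  have step1 : (1.8 : ℝ) < 3 * (x * 3) := by nlinarith
  have step2 : x * 3 ≤ x * (2 * m + 1) := by nlinarith
  have step3 : 3 * (x * (2 * m + 1)) ≤ Real.pi * (x * (2 * m + 1)) := by
    apply mul_le_mul_of_nonneg_right Real.pi_gt_three.le
    nlinarith
  have : (1.8 : ℝ) < Real.pi * x * (2 * m + 1) := by nlinarith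
  calc (4 : ℝ) < Real.exp 1.8 := h18
    _ < Real.exp (Real.pi * x * (2 * m + 1)) := Real.exp_lt_exp.mpr this

/-- The function x ↦ e^{-πm²x} − e^{-π(m+1)²x} is strictly decreasing on [0.2, ∞). -/
lemma key_anti (m : ℕ) (hm : 1 ≤ m) :
    StrictAntiOn (fun x : ℝ =>
      Real.exp (-Real.pi * x * (m : ℝ) ^ 2) - Real.exp (-Real.pi * x * ((m : ℝ) + 1) ^ 2))
      (Set.Ici (0.2 : ℝ)) := by
  have hm' : (1 : ℝ) ≤ (m : ℝ) := by exact_mod_cast hm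
  apply strictAntiOn_of_deriv_neg (convex_Ici _)
  · fun_prop
  · intro x hx
    rw [interior_Ici] at hx
    have hx2 : (0.2 : ℝ) < x := hx
    have hd1 : HasDerivAt (fun x : ℝ => Real.exp (-Real.pi * x * (m : ℝ) ^ 2))
        (Real.exp (-Real.pi * x * (m : ℝ) ^ 2) * (-Real.pi * (m : ℝ) ^ 2)) x := by
      have l : HasDerivAt (fun x : ℝ => -Real.pi * x * (m : ℝ) ^ 2)
          (-Real.pi * (m : ℝ) ^ 2) x := by
        simpa using ((hasDerivAt_id x).const_mul (-Real.pi)).mul_const ((m : ℝ) ^ 2)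
      exact l.exp
    have hd2 : HasDerivAt (fun x : ℝ => Real.exp (-Real.pi * x * ((m : ℝ) + 1) ^ 2))
        (Real.exp (-Real.pi * x * ((m : ℝ) + 1) ^ 2) * (-Real.pi * ((m : ℝ) + 1) ^ 2)) x := by
      have l : HasDerivAt (fun x : ℝ => -Real.pi * x * ((m : ℝ) + 1) ^ 2)
          (-Real.pi * ((m : ℝ) + 1) ^ 2) x := by
        simpa using ((hasDerivAt_id x).const_mul (-Real.pi)).mul_const (((m : ℝ) + 1) ^ 2)
      exact l.exp
    rw [(show HasDerivAt (fun x : ℝ => Real.exp (-Real.pi * x * (m : ℝ) ^ 2) -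
        Real.exp (-Real.pi * x * ((m : ℝ) + 1) ^ 2)) _ x from hd1.sub hd2).deriv]
    have e2 : Real.exp (-Real.pi * x * ((m : ℝ) + 1) ^ 2) =
        Real.exp (-Real.pi * x * (m : ℝ) ^ 2) *
          Real.exp (-(Real.pi * x * (2 * (m : ℝ) + 1))) := by
      rw [← Real.exp_add]; congr 1; ring
    have h14 : Real.exp (-(Real.pi * x * (2 * (m : ℝ) + 1))) < 1 / 4 := by
      rw [Real.exp_neg]
      have h4 := exp_bound hx2 hm'
      rw [show (1 : ℝ) / 4 = 4⁻¹ by norm_num]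
      exact inv_strictAnti₀ (by norm_num) h4
    have hmain : Real.exp (-(Real.pi * x * (2 * (m : ℝ) + 1))) * ((m : ℝ) + 1) ^ 2
        < (m : ℝ) ^ 2 := by
      have hsq : ((m : ℝ) + 1) ^ 2 ≤ 4 * (m : ℝ) ^ 2 := by nlinarith
      have hpos : (0 : ℝ) < Real.exp (-(Real.pi * x * (2 * (m : ℝ) + 1))) := Real.exp_pos _
      calc Real.exp (-(Real.pi * x * (2 * (m : ℝ) + 1))) * ((m : ℝ) + 1) ^ 2
          ≤ Real.exp (-(Real.pi * x * (2 * (m : ℝ) + 1))) * (4 * (m : ℝ) ^ 2) :=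
            mul_le_mul_of_nonneg_left hsq hpos.le
        _ < (1 / 4) * (4 * (m : ℝ) ^ 2) := by
            apply mul_lt_mul_of_pos_right h14 (by nlinarith)
        _ = (m : ℝ) ^ 2 := by ring
    rw [e2]
    nlinarith [Real.exp_pos (-Real.pi * x * (m : ℝ) ^ 2), Real.pi_pos,
      mul_pos Real.pi_pos (Real.exp_pos (-Real.pi * x * (m : ℝ) ^ 2))]

lemma key (m : ℕ) (hm : 1 ≤ m) {a b : ℝ} (ha : 0.2 < a) (hab : a < b) :
    E b m - E b (m + 1) < E a m - E a (m + 1) := by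
  have h1 : ((m + 1 : ℕ) : ℝ) = (m : ℝ) + 1 := by push_cast; ring
  have := key_anti m hm (Set.mem_Ici.mpr ha.le)
    (Set.mem_Ici.mpr (le_trans ha.le hab.le)) hab
  simpa [E, h1] using this

theorem theta3R_half_pi_strictMonoOn :
    StrictMonoOn (fun x : ℝ => theta3R (Real.pi / 2) x) (Set.Ioi (0.2 : ℝ)) := by
  intro a ha b hb hab
  rw [Set.mem_Ioi] at ha hb
  have ha0 : (0 : ℝ) < a := lt_trans (by norm_num) ha
  have hb0 : (0 : ℝ) < b := lt_trans (by norm_num) hb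
  show theta3R (Real.pi / 2) a < theta3R (Real.pi / 2) b
  rw [theta_eq ha0, theta_eq hb0]
  have hga := summable_g ha0
  have hgb := summable_g hb0
  set ga : ℕ → ℝ := fun n => (-1 : ℝ) ^ (n + 1) * E a (n + 1) with hga_def
  set gb : ℕ → ℝ := fun n => (-1 : ℝ) ^ (n + 1) * E b (n + 1) with hgb_def
  suffices h : (0 : ℝ) < ∑' n : ℕ, (gb n - ga n) by
    rw [Summable.tsum_sub hgb hga] at h
    linarith
  have hD : Summable fun n => gb n - ga n := hgb.sub hga
  have hinj2 : Function.Injective (fun k : ℕ => 2 * k) := by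
    intro x y h; simp only at h; omega
  have hinj21 : Function.Injective (fun k : ℕ => 2 * k + 1) := by
    intro x y h; simp only at h; omega
  have he : Summable fun k : ℕ => (fun n => gb n - ga n) (2 * k) := hD.comp_injective hinj2
  have ho : Summable fun k : ℕ => (fun n => gb n - ga n) (2 * k + 1) :=
    hD.comp_injective hinj21
  have heq := tsum_even_add_odd (f := fun n => gb n - ga n) he ho
  rw [← heq, ← Summable.tsum_add he ho]
  have sign1 : ∀ k : ℕ, ((-1 : ℝ)) ^ (2 * k + 1) = -1 := fun k =>
    Odd.neg_one_pow ⟨k, by ring⟩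
  have sign2 : ∀ k : ℕ, ((-1 : ℝ)) ^ (2 * k + 1 + 1) = 1 := fun k =>
    Even.neg_one_pow ⟨k + 1, by ring⟩
  have hterm : ∀ k : ℕ, 0 < gb (2 * k) - ga (2 * k) + (gb (2 * k + 1) - ga (2 * k + 1)) := by
    intro k
    have hkey := key (2 * k + 1) (by omega) ha hab
    simp only [hga_def, hgb_def, sign1, sign2]
    linarith
  refine Summable.tsum_pos (he.add ho) (fun k => (hterm k).le) 0 (hterm 0)
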